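/- Let δ > 0 and let Y be a random variable supported on [0, M] whose distribution has a density f with f(y) ≥ b > 0 for all y ∈ [0, M] and sup_{y ∈ [0,M]} f(y) < ∞. Then the dual objective φ(α) = −α log E[exp(−Y/α)] − αδ satisfies sup_{α > 0} φ(α) > 0 = essinf Y; in particular the supremum of φ over α ≥ 0 (with φ(0) := essinf Y) is not attained at α = 0. -/

import Mathlib

open MeasureTheory Real Set

/-- The dual objective `φ(α) = −α log E[exp(−Y/α)] − αδ` of the KL-DRO evaluation problem,
with `φ(0)` defined to be the essential infimum of `Y`. -/
noncomputable def dualKL {Ω : Type*} [MeasurableSpace Ω] (μ : Measure Ω) (Y : Ω → ℝ)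
    (δ α : ℝ) : ℝ :=
  if α = 0 then essInf Y μ
  else -α * Real.log (∫ ω, Real.exp (-Y ω / α) ∂μ) - α * δ

/-- **The optimal dual variable is strictly positive:** if `Y` is supported on `[0, M]` with a
density bounded below by `b > 0` and bounded above on `[0, M]`, then
`sup_{α>0} φ(α) > 0 = essinf Y`; in particular the supremum of `φ` over `α ≥ 0`
(with `φ(0) := essinf Y`) is not attained at `α = 0`. -/
theorem stmt7 {Ω : Type*} [MeasurableSpace Ω] (μ : Measure Ω) [IsProbabilityMeasure μ]
    (Y : Ω → ℝ) (hY : Measurable Y) (M b : ℝ) (hb : 0 < b) (δ : ℝ) (hδ : 0 < δ)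
    (f : ℝ → ℝ) (hfmeas : Measurable f)
    (hf0 : ∀ y : ℝ, y ∉ Set.Icc 0 M → f y = 0)
    (hfb : ∀ y ∈ Set.Icc (0 : ℝ) M, b ≤ f y)
    (hfub : ∃ B : ℝ, ∀ y ∈ Set.Icc (0 : ℝ) M, f y ≤ B)
    (hlaw : Measure.map Y μ = MeasureTheory.volume.withDensity
      (fun y => ENNReal.ofReal (f y))) :
    essInf Y μ = 0 ∧
    (0 : ℝ) < sSup {r : ℝ | ∃ α : ℝ, 0 < α ∧
        r = -α * Real.log (∫ ω, Real.exp (-Y ω / α) ∂μ) - α * δ} ∧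
    dualKL μ Y δ 0 < sSup {r : ℝ | ∃ α : ℝ, 0 ≤ α ∧ r = dualKL μ Y δ α} := by
  obtain ⟨B, hB⟩ := hfub
  -- law of Y as a set-lintegral
  have hmapY : ∀ s : Set ℝ, MeasurableSet s →
      μ (Y ⁻¹' s) = ∫⁻ y in s, ENNReal.ofReal (f y) := by
    intro s hs
    rw [← Measure.map_apply hY hs, hlaw, withDensity_apply _ hs]
  -- Y ≥ 0 a.e.
  have hIio0 : μ (Y ⁻¹' Iio 0) = 0 := by
    rw [hmapY _ measurableSet_Iio]
    rw [setLIntegral_congr_fun measurableSet_Iio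
      (fun y (hy : y < 0) => by
        rw [hf0 y (fun h => absurd h.1 (not_le.mpr hy)), ENNReal.ofReal_zero])]
    simp
  have hY0 : ∀ᵐ ω ∂μ, 0 ≤ Y ω := by
    rw [ae_iff]
    convert hIio0 using 2
    ext ω; simp [not_le]
  -- Y ≤ M a.e.
  have hIoiM : μ (Y ⁻¹' Ioi M) = 0 := by
    rw [hmapY _ measurableSet_Ioi]
    rw [setLIntegral_congr_fun measurableSet_Ioi
      (fun y (hy : M < y) => by
        rw [hf0 y (fun h => absurd h.2 (not_le.mpr hy)), ENNReal.ofReal_zero])]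
    simp
  have hYM : ∀ᵐ ω ∂μ, Y ω ≤ M := by
    rw [ae_iff]
    convert hIoiM using 2
    ext ω; simp [not_le]
  -- M > 0
  have hM : 0 < M := by
    by_contra hM
    push_neg at hM
    have h1 : (1 : ENNReal) = μ (Y ⁻¹' univ) := by simp
    rw [hmapY _ MeasurableSet.univ, Measure.restrict_univ] at h1
    have h0 : ∫⁻ y, ENNReal.ofReal (f y) = 0 := by
      rw [lintegral_eq_zero_iff hfmeas.ennreal_ofReal]
      rw [Filter.EventuallyEq, ae_iff]
      refine measure_mono_null (fun y hy => ?_) (volume_singleton (a := (0 : ℝ)))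
      simp only [mem_setOf_eq, Pi.zero_apply, ENNReal.ofReal_eq_zero, not_le] at hy
      have hyIcc : y ∈ Icc 0 M := by
        by_contra h
        rw [hf0 y h] at hy
        exact absurd hy (by norm_num)
      have := le_antisymm (hyIcc.2.trans hM) hyIcc.1
      simp [← this]
    rw [h0] at h1
    exact one_ne_zero h1
  have hbB : b ≤ B := le_trans (hfb 0 ⟨le_refl 0, hM.le⟩) (hB 0 ⟨le_refl 0, hM.le⟩)
  have hBpos : 0 < B := lt_of_lt_of_le hb hbB
  -- positive mass below any positive level
  have hlow : ∀ a : ℝ, 0 < a → 0 < μ (Y ⁻¹' Iio a) := by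
    intro a ha
    rw [hmapY _ measurableSet_Iio]
    have hsub : Ico (0 : ℝ) (min a M) ⊆ Iio a := fun y hy =>
      lt_of_lt_of_le hy.2 (min_le_left _ _)
    have h1 : ∫⁻ y in Ico (0 : ℝ) (min a M), ENNReal.ofReal b ≤
        ∫⁻ y in Iio a, ENNReal.ofReal (f y) := by
      refine le_trans (setLIntegral_mono hfmeas.ennreal_ofReal ?_)
        (lintegral_mono_set hsub)
      intro y hy
      exact ENNReal.ofReal_le_ofReal
        (hfb y ⟨hy.1, le_trans hy.2.le (min_le_right _ _)⟩)
    refine lt_of_lt_of_le ?_ h1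
    rw [setLIntegral_const, Real.volume_Ico]
    apply ENNReal.mul_pos
    · simp [hb, hb.not_ge]
    · simp only [ne_eq, ENNReal.ofReal_eq_zero, not_le, sub_zero]
      exact lt_min ha hM
  -- essInf Y μ = 0
  have hess : essInf Y μ = 0 := by
    have : essInf Y μ = Filter.liminf Y (ae μ) := rfl
    rw [this, Filter.liminf_eq]
    apply IsGreatest.csSup_eq
    constructor
    · exact hY0
    · intro a ha
      by_contra h
      push_neg at h
      have ha' : μ {ω | ¬ a ≤ Y ω} = 0 := ha
      have : μ (Y ⁻¹' Iio a) = 0 := by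
        convert ha' using 2
        ext ω; simp [not_le]
      exact absurd this (hlow a h).ne'
  -- integrability
  have hmeasexp : ∀ α : ℝ, Measurable fun ω => Real.exp (-Y ω / α) :=
    fun α => ((hY.neg.div_const α)).exp
  have hint : ∀ α : ℝ, 0 < α → Integrable (fun ω => Real.exp (-Y ω / α)) μ := by
    intro α hα
    refine Integrable.mono' (integrable_const 1)
      (hmeasexp α).aestronglyMeasurable ?_
    filter_upwards [hY0] with ω hω
    rw [Real.norm_eq_abs, abs_of_pos (Real.exp_pos _)]
    exact Real.exp_le_one_iff.mpr (div_nonpos_of_nonpos_of_nonneg (neg_nonpos.mpr hω) hα.le)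
  -- lower bound on the moment generating function
  have hEge : ∀ α : ℝ, 0 < α →
      Real.exp (-M / α) ≤ ∫ ω, Real.exp (-Y ω / α) ∂μ := by
    intro α hα
    have hae : (fun _ : Ω => Real.exp (-M / α)) ≤ᵐ[μ] fun ω => Real.exp (-Y ω / α) := by
      filter_upwards [hYM] with ω hω
      exact Real.exp_le_exp.mpr (by gcongr)
    have h := integral_mono_ae (integrable_const (Real.exp (-M / α))) (hint α hα) hae
    simpa using h
  have hEpos : ∀ α : ℝ, 0 < α → 0 < ∫ ω, Real.exp (-Y ω / α) ∂μ :=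
    fun α hα => lt_of_lt_of_le (Real.exp_pos _) (hEge α hα)
  -- upper bound M on the dual objective
  have hub : ∀ α : ℝ, 0 < α →
      -α * Real.log (∫ ω, Real.exp (-Y ω / α) ∂μ) - α * δ ≤ M := by
    intro α hα
    have h1 : -M / α ≤ Real.log (∫ ω, Real.exp (-Y ω / α) ∂μ) := by
      have := Real.log_le_log (Real.exp_pos (-M / α)) (hEge α hα)
      rwa [Real.log_exp] at this
    have h2 : -α * Real.log (∫ ω, Real.exp (-Y ω / α) ∂μ) ≤ M := by
      rw [neg_mul, neg_le]
      have := mul_le_mul_of_nonneg_left h1 hα.le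
      calc -M = α * (-M / α) := by field_simp
        _ ≤ α * Real.log (∫ ω, Real.exp (-Y ω / α) ∂μ) := this
    nlinarith [mul_pos hα hδ]
  -- choose t and α₀
  set t : ℝ := Real.exp (-δ) / (4 * B) with ht_def
  have ht : 0 < t := div_pos (Real.exp_pos _) (by linarith)
  have hlog4 : 0 < δ + Real.log 4 := by
    have : 0 < Real.log 4 := Real.log_pos (by norm_num)
    linarith
  set α₀ : ℝ := t / (δ + Real.log 4) with hα₀_def
  have hα₀ : 0 < α₀ := div_pos ht hlog4
  -- bound μ (Y < t)
  have hμt : μ (Y ⁻¹' Iio t) ≤ ENNReal.ofReal (Real.exp (-δ) / 4) := by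
    rw [hmapY _ measurableSet_Iio]
    have h1 : ∫⁻ y in Iio t, ENNReal.ofReal (f y) ≤
        ∫⁻ y in Iio t, (Ico (0 : ℝ) t).indicator (fun _ => ENNReal.ofReal B) y := by
      apply setLIntegral_mono (Measurable.indicator measurable_const measurableSet_Ico)
      intro y hy
      by_cases hyIcc : y ∈ Icc (0 : ℝ) M
      · have : y ∈ Ico (0 : ℝ) t := ⟨hyIcc.1, hy⟩
        rw [indicator_of_mem this]
        exact ENNReal.ofReal_le_ofReal (hB y hyIcc)
      · rw [hf0 y hyIcc]
        simp
    refine le_trans h1 ?_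
    refine le_trans (setLIntegral_le_lintegral _ _) ?_
    rw [lintegral_indicator_const measurableSet_Ico, Real.volume_Ico, sub_zero,
      ← ENNReal.ofReal_mul hBpos.le]
    apply ENNReal.ofReal_le_ofReal
    rw [ht_def]
    rw [mul_div_assoc']
    rw [div_le_div_iff₀ (by linarith) (by norm_num)]
    ring_nf
    nlinarith [Real.exp_pos (-δ)]
  -- bound the integral at α₀
  have hE : ∫ ω, Real.exp (-Y ω / α₀) ∂μ < Real.exp (-δ) := by
    have hexp_t : Real.exp (-t / α₀) = Real.exp (-δ) / 4 := by
      have h4 : t / α₀ = δ + Real.log 4 := by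
        rw [hα₀_def]; field_simp
      rw [neg_div, h4, neg_add, Real.exp_add, Real.exp_neg (Real.log 4),
        Real.exp_log (by norm_num : (0:ℝ) < 4)]
      ring
    set g : Ω → ℝ := fun ω =>
      (Y ⁻¹' Iio t).indicator (fun _ => (1 : ℝ)) ω + Real.exp (-t / α₀) with hg_def
    have hgint : Integrable g μ := by
      apply Integrable.add
      · exact (integrable_const (1 : ℝ)).indicator (hY measurableSet_Iio)
      · exact integrable_const _
    have hmono : (fun ω => Real.exp (-Y ω / α₀)) ≤ᵐ[μ] g := by
      filter_upwards [hY0] with ω hω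
      by_cases hωt : Y ω < t
      · have h1 : Real.exp (-Y ω / α₀) ≤ 1 :=
          Real.exp_le_one_iff.mpr (div_nonpos_of_nonpos_of_nonneg (neg_nonpos.mpr hω) hα₀.le)
        rw [hg_def]
        simp only [indicator_of_mem (show ω ∈ Y ⁻¹' Iio t from hωt)]
        nlinarith [Real.exp_pos (-t / α₀)]
      · push_neg at hωt
        have h1 : Real.exp (-Y ω / α₀) ≤ Real.exp (-t / α₀) :=
          Real.exp_le_exp.mpr (by gcongr)
        rw [hg_def]
        simp only [indicator_of_notMem (show ω ∉ Y ⁻¹' Iio t by simpa [not_lt] using hωt)]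
        linarith
    have hle : ∫ ω, Real.exp (-Y ω / α₀) ∂μ ≤ ∫ ω, g ω ∂μ :=
      integral_mono_ae (hint α₀ hα₀) hgint hmono
    have hgeq : ∫ ω, g ω ∂μ = (μ (Y ⁻¹' Iio t)).toReal + Real.exp (-t / α₀) := by
      rw [hg_def, integral_add ((integrable_const (1 : ℝ)).indicator (hY measurableSet_Iio))
        (integrable_const _), integral_indicator_const _ (hY measurableSet_Iio),
        integral_const]
      simp
      rfl
    have hμt' : (μ (Y ⁻¹' Iio t)).toReal ≤ Real.exp (-δ) / 4 := by
      refine ENNReal.toReal_le_of_le_ofReal (by positivity) hμt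
    rw [hgeq, hexp_t] at hle
    have : Real.exp (-δ) / 4 + Real.exp (-δ) / 4 < Real.exp (-δ) := by
      nlinarith [Real.exp_pos (-δ)]
    linarith
  -- the dual objective is positive at α₀
  set r₀ : ℝ := -α₀ * Real.log (∫ ω, Real.exp (-Y ω / α₀) ∂μ) - α₀ * δ with hr₀_def
  have hr₀pos : 0 < r₀ := by
    have hlogE : Real.log (∫ ω, Real.exp (-Y ω / α₀) ∂μ) < -δ := by
      have := Real.log_lt_log (hEpos α₀ hα₀) hE
      rwa [Real.log_exp] at this
    rw [hr₀_def]
    nlinarith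
  -- bounded above
  have hBdd1 : BddAbove {r : ℝ | ∃ α : ℝ, 0 < α ∧
      r = -α * Real.log (∫ ω, Real.exp (-Y ω / α) ∂μ) - α * δ} := by
    refine ⟨M, fun r hr => ?_⟩
    obtain ⟨α, hα, rfl⟩ := hr
    exact hub α hα
  have hBdd2 : BddAbove {r : ℝ | ∃ α : ℝ, 0 ≤ α ∧ r = dualKL μ Y δ α} := by
    refine ⟨M, fun r hr => ?_⟩
    obtain ⟨α, hα, rfl⟩ := hr
    rcases eq_or_lt_of_le hα with h | h
    · rw [dualKL, if_pos h.symm, hess]; exact hM.le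
    · rw [dualKL, if_neg h.ne']; exact hub α h
  refine ⟨hess, ?_, ?_⟩
  · exact lt_of_lt_of_le hr₀pos (le_csSup hBdd1 ⟨α₀, hα₀, rfl⟩)
  · have h0 : dualKL μ Y δ 0 = 0 := by rw [dualKL, if_pos rfl, hess]
    rw [h0]
    refine lt_of_lt_of_le hr₀pos (le_csSup hBdd2 ⟨α₀, hα₀.le, ?_⟩)
    rw [dualKL, if_neg hα₀.ne']
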